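/- Let f : A → B and g : B → C be ring homomorphisms of finite type between locally Noetherian rings. If g ∘ f is étale and f is unramified, then g is étale. -/

import Mathlib

universe u

open Algebra in
theorem aux_smooth (A B C : Type u) [CommRing A] [CommRing B] [CommRing C]
    [Algebra A B] [Algebra B C] [Algebra A C] [IsScalarTower A B C]
    [FormallyUnramified A B] [FormallySmooth A C] : FormallySmooth B C := by
  refine FormallySmooth.of_comp_surjective ?_
  intro D _ _ I hI g
  letI : Algebra A D := ((algebraMap B D).comp (algebraMap A B)).toAlgebra
  letI : IsScalarTower A B D := IsScalarTower.of_algebraMap_eq' rfl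
  letI : IsScalarTower A B (D ⧸ I) := IsScalarTower.of_algebraMap_eq' rfl
  obtain ⟨f, hf⟩ := FormallySmooth.comp_surjective (R := A) (A := C) I hI (g.restrictScalars A)
  have hcomm : f.comp (IsScalarTower.toAlgHom A B C) = IsScalarTower.toAlgHom A B D := by
    refine FormallyUnramified.ext I ⟨2, hI⟩ (fun b => ?_)
    have h1 : Ideal.Quotient.mk I (f (algebraMap B C b)) = g (algebraMap B C b) :=
      AlgHom.congr_fun hf (algebraMap B C b)
    have h2 : g (algebraMap B C b) = algebraMap B (D ⧸ I) b := g.commutes b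
    simp only [AlgHom.coe_comp, Function.comp_apply, IsScalarTower.coe_toAlgHom']
    rw [h1, h2, IsScalarTower.algebraMap_apply B D (D ⧸ I)]
    rfl
  refine ⟨{ f with commutes' := fun b => by simpa using AlgHom.congr_fun hcomm b }, ?_⟩
  ext x
  exact AlgHom.congr_fun hf x

theorem stmt_9 (A B C : Type u) [CommRing A] [CommRing B] [CommRing C]
    [IsNoetherianRing A] [IsNoetherianRing B] [IsNoetherianRing C]
    [Algebra A B] [Algebra B C] [Algebra A C] [IsScalarTower A B C]
    [Algebra.FiniteType A B] [Algebra.FiniteType B C]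
    (hAC : Algebra.Etale A C) (hAB : Algebra.Unramified A B) :
    Algebra.Etale B C := by
  have h1 : Algebra.FormallyEtale A C := hAC.formallyEtale
  have h2 : Algebra.FormallyUnramified A B := hAB.formallyUnramified
  have h3 : Algebra.FormallyUnramified A C := inferInstance
  have h4 : Algebra.FormallySmooth A C := inferInstance
  have h5 : Algebra.FormallyUnramified B C := Algebra.FormallyUnramified.of_restrictScalars A B C
  have h6 : Algebra.FormallySmooth B C := aux_smooth A B C
  refine ⟨?_, ?_⟩
  · exact Algebra.FormallyEtale.iff_formallyUnramified_and_formallySmooth.mpr ⟨h5, h6⟩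
  · exact Algebra.FinitePresentation.of_finiteType.mp ‹_›
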